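/- Let G = (V, E, ℓ) be a labeled graph with n vertices and let k ≥ 2. Define an alternative coloring D_t of V^k by: D_0 induces the same partition as C^{δ,k}_0, and D_t(u) = D_t(v) iff D_{t−1}(u) = D_{t−1}(v) and for every j ∈ {1,…,k} both the multisets {{D_{t−1}(φ_j(u, w)) : w ∈ N(u_j)}} and {{D_{t−1}(φ_j(v, w)) : w ∈ N(v_j)}} coincide and the multisets {{D_{t−1}(φ_j(u, w)) : w ∈ V ∖ N(u_j)}} and {{D_{t−1}(φ_j(v, w)) : w ∈ V ∖ N(v_j)}} coincide. Then for every t ≥ 0 and all k-tuples u, v ∈ V^k: D_t(u) = D_t(v) if and only if C^{δ,k}_t(u) = C^{δ,k}_t(v). -/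
import Mathlib

private lemma mapiff {α β γ : Type*} (f : α → β) (g : α → γ)
    (h : ∀ a b, f a = f b ↔ g a = g b) (s t : Multiset α) :
    s.map f = t.map f ↔ s.map g = t.map g := by
  rw [← Multiset.rel_eq, ← Multiset.rel_eq, Multiset.rel_map, Multiset.rel_map]
  constructor
  · exact fun r => r.mono fun a _ b _ hab => (h a b).mp hab
  · exact fun r => r.mono fun a _ b _ hab => (h a b).mpr hab

private lemma split_pairs (A A' B B' : Multiset ℕ) :
    A.map (fun c => (c, (1:ℕ))) + B.map (fun c => (c, (0:ℕ))) =
      A'.map (fun c => (c, (1:ℕ))) + B'.map (fun c => (c, (0:ℕ))) ↔ A = A' ∧ B = B' := by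
  constructor
  · intro h
    have inj1 : Function.Injective (fun c : ℕ => (c, (1:ℕ))) := fun a b hab => by
      simpa using hab
    have inj0 : Function.Injective (fun c : ℕ => (c, (0:ℕ))) := fun a b hab => by
      simpa using hab
    constructor
    · apply Multiset.map_injective inj1
      have := congrArg (Multiset.filter (fun p : ℕ × ℕ => p.2 = 1)) h
      rw [Multiset.filter_add, Multiset.filter_add, Multiset.filter_map, Multiset.filter_map,
        Multiset.filter_map, Multiset.filter_map] at this
      simpa [Multiset.filter_eq_self.mpr, Multiset.filter_eq_nil.mpr,
        Function.comp_def] using this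
    · apply Multiset.map_injective inj0
      have := congrArg (Multiset.filter (fun p : ℕ × ℕ => p.2 = 0)) h
      rw [Multiset.filter_add, Multiset.filter_add, Multiset.filter_map, Multiset.filter_map,
        Multiset.filter_map, Multiset.filter_map] at this
      simpa [Multiset.filter_eq_self.mpr, Multiset.filter_eq_nil.mpr,
        Function.comp_def] using this
  · rintro ⟨rfl, rfl⟩; rfl

theorem stmt13 {n k : ℕ} (hk : 2 ≤ k) (G : SimpleGraph (Fin n)) [DecidableRel G.Adj]
    (ℓ : Fin n → ℕ)
    (C : ℕ → (Fin k → Fin n) → ℕ)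
    (hC0 : ∀ u v, C 0 u = C 0 v ↔
      ((∀ i j, (u i = u j ↔ v i = v j) ∧ (G.Adj (u i) (u j) ↔ G.Adj (v i) (v j))) ∧
        ∀ i, ℓ (u i) = ℓ (v i)))
    (hCt : ∀ t u v, C (t + 1) u = C (t + 1) v ↔
      (C t u = C t v ∧ ∀ j : Fin k,
        (Finset.univ.val.map fun w : Fin n =>
            (C t (Function.update u j w), if G.Adj (u j) w then (1 : ℕ) else 0)) =
          (Finset.univ.val.map fun w : Fin n =>
            (C t (Function.update v j w), if G.Adj (v j) w then (1 : ℕ) else 0))))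
    (D : ℕ → (Fin k → Fin n) → ℕ)
    (hD0 : ∀ u v, D 0 u = D 0 v ↔ C 0 u = C 0 v)
    (hDt : ∀ t u v, D (t + 1) u = D (t + 1) v ↔
      (D t u = D t v ∧ ∀ j : Fin k,
        ((G.neighborFinset (u j)).val.map fun w => D t (Function.update u j w)) =
          ((G.neighborFinset (v j)).val.map fun w => D t (Function.update v j w)) ∧
        (((G.neighborFinset (u j))ᶜ).val.map fun w => D t (Function.update u j w)) =
          (((G.neighborFinset (v j))ᶜ).val.map fun w => D t (Function.update v j w)))) :
    ∀ t u v, D t u = D t v ↔ C t u = C t v := by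
  have hsplit : ∀ s : Finset (Fin n), s.val + sᶜ.val = (Finset.univ : Finset (Fin n)).val := by
    intro s
    have h1 : s.disjUnion sᶜ disjoint_compl_right = Finset.univ := by
      rw [Finset.disjUnion_eq_union, Finset.union_compl]
    simpa [Finset.disjUnion] using congrArg Finset.val h1
  intro t
  induction t with
  | zero => exact hD0
  | succ t ih =>
    intro u v
    rw [hDt, hCt]
    have key : ∀ j : Fin k,
        ((Finset.univ.val.map fun w : Fin n =>
            (C t (Function.update u j w), if G.Adj (u j) w then (1 : ℕ) else 0)) =
          (Finset.univ.val.map fun w : Fin n =>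
            (C t (Function.update v j w), if G.Adj (v j) w then (1 : ℕ) else 0))) ↔
        (((G.neighborFinset (u j)).val.map fun w => D t (Function.update u j w)) =
          ((G.neighborFinset (v j)).val.map fun w => D t (Function.update v j w)) ∧
        (((G.neighborFinset (u j))ᶜ).val.map fun w => D t (Function.update u j w)) =
          (((G.neighborFinset (v j))ᶜ).val.map fun w => D t (Function.update v j w))) := by
      intro j
      have expand : ∀ x : Fin k → Fin n,
          (Finset.univ.val.map fun w : Fin n =>
            (C t (Function.update x j w), if G.Adj (x j) w then (1 : ℕ) else 0)) =
          ((G.neighborFinset (x j)).val.map fun w => C t (Function.update x j w)).map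
              (fun c => (c, (1:ℕ))) +
          (((G.neighborFinset (x j))ᶜ).val.map fun w => C t (Function.update x j w)).map
              (fun c => (c, (0:ℕ))) := by
        intro x
        rw [← hsplit (G.neighborFinset (x j)), Multiset.map_add, Multiset.map_map,
          Multiset.map_map]
        congr 1
        · apply Multiset.map_congr rfl
          intro w hw
          have : G.Adj (x j) w := by
            simpa [SimpleGraph.mem_neighborFinset] using hw
          simp [this]
        · apply Multiset.map_congr rfl
          intro w hw
          have : ¬ G.Adj (x j) w := by
            simp only [← Finset.mem_def, Finset.mem_compl, SimpleGraph.mem_neighborFinset] at hw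
            exact hw
          simp [this]
      rw [expand u, expand v, split_pairs]
      have conv : ∀ (su sv : Multiset (Fin n)),
          ((su.map fun w => C t (Function.update u j w)) =
            (sv.map fun w => C t (Function.update v j w))) ↔
          ((su.map fun w => D t (Function.update u j w)) =
            (sv.map fun w => D t (Function.update v j w))) := by
        intro su sv
        have h1 : (su.map fun w => C t (Function.update u j w)) =
            (su.map (Function.update u j)).map (C t) := by
          rw [Multiset.map_map]; rfl
        have h2 : (sv.map fun w => C t (Function.update v j w)) =
            (sv.map (Function.update v j)).map (C t) := by
          rw [Multiset.map_map]; rfl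
        have h3 : (su.map fun w => D t (Function.update u j w)) =
            (su.map (Function.update u j)).map (D t) := by
          rw [Multiset.map_map]; rfl
        have h4 : (sv.map fun w => D t (Function.update v j w)) =
            (sv.map (Function.update v j)).map (D t) := by
          rw [Multiset.map_map]; rfl
        rw [h1, h2, h3, h4]
        exact (mapiff (C t) (D t) (fun a b => (ih a b).symm) _ _)
      rw [conv, conv]
    constructor
    · rintro ⟨h1, h2⟩
      exact ⟨(ih u v).mp h1, fun j => (key j).mpr (h2 j)⟩
    · rintro ⟨h1, h2⟩
      exact ⟨(ih u v).mpr h1, fun j => (key j).mp (h2 j)⟩
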